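/- Let Λ, β, α, μ₁, μ₂, d₁, d₂ > 0, θ ∈ ℝ, S₀ = Λ/μ₁, and assume βS₀/μ₂ > 1. Let (S*, I*) be the positive endemic equilibrium. Suppose c ∈ ℝ and S, I : ℝ → ℝ are differentiable, solve the traveling-wave system cS'(ξ) = d₁𝔍[S](ξ) + Λ − βS(ξ)I(ξ)/(1 + αI(ξ)) − μ₁S(ξ), cI'(ξ) = d₂𝔍[I](ξ) + βS(ξ)I(ξ)/(1 + αI(ξ)) − μ₂I(ξ), satisfy S(ξ) > 0 and I(ξ) > 0 for all ξ, I is integrable on (−∞, 0], and (S(ξ), I(ξ)) → (S₀, 0) as ξ → −∞ and (S(ξ), I(ξ)) → (S*, I*) as ξ → +∞. Then c > 0. -/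

import Mathlib

open MeasureTheory Set Filter

lemma integrableOn_exp_mul_Iic' {l : ℝ} (hl : 0 < l) (M : ℝ) :
    IntegrableOn (fun x => Real.exp (l * x)) (Set.Iic M) := by
  have h0 : Integrable ((Set.Iic (l * M)).indicator Real.exp) := by
    rw [integrable_indicator_iff measurableSet_Iic]
    exact integrableOn_exp_Iic (l * M)
  have h1 := h0.comp_mul_left' hl.ne'
  have h2 : (fun x => (Set.Iic (l * M)).indicator Real.exp (l * x))
      = (Set.Iic M).indicator (fun x => Real.exp (l * x)) := by
    funext x
    by_cases hx : x ≤ M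
    · rw [Set.indicator_of_mem (by exact hx : x ∈ Set.Iic M),
        Set.indicator_of_mem (by simpa using (mul_le_mul_of_nonneg_left hx hl.le) : l * x ∈ Set.Iic (l * M))]
    · rw [Set.indicator_of_notMem (by exact hx : ¬ x ∈ Set.Iic M),
        Set.indicator_of_notMem]
      simp only [Set.mem_Iic, not_le] at hx ⊢
      exact (mul_lt_mul_iff_right₀ hl).2 hx
  rw [h2] at h1
  exact (integrable_indicator_iff measurableSet_Iic).1 h1

/-- Discrete Laplacian in direction `θ`. -/
noncomputable def lap (θ : ℝ) (φ : ℝ → ℝ) (ξ : ℝ) : ℝ :=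
  φ (ξ + Real.sin θ) + φ (ξ - Real.sin θ) + φ (ξ + Real.cos θ) + φ (ξ - Real.cos θ) - 4 * φ ξ

lemma lap_continuous {θ : ℝ} {φ : ℝ → ℝ} (hφ : Continuous φ) : Continuous (lap θ φ) := by
  unfold lap
  fun_prop

lemma lap_tendsto_atBot {θ : ℝ} {φ : ℝ → ℝ} (hφ : Tendsto φ atBot (nhds 0)) :
    Tendsto (lap θ φ) atBot (nhds 0) := by
  have hsh : ∀ r : ℝ, Tendsto (fun a => φ (a + r)) atBot (nhds 0) := by
    intro r
    exact hφ.comp (tendsto_atBot_add_const_right atBot r tendsto_id)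
  have hsh' : ∀ r : ℝ, Tendsto (fun a => φ (a - r)) atBot (nhds 0) := by
    intro r
    simpa [sub_eq_add_neg] using hsh (-r)
  have h4 : Tendsto (fun a => (4:ℝ) * φ a) atBot (nhds (4 * 0)) := hφ.const_mul 4
  have := (((((hsh (Real.sin θ)).add (hsh' (Real.sin θ))).add (hsh (Real.cos θ))).add
    (hsh' (Real.cos θ))).sub h4)
  unfold lap
  convert this using 2
  ring

lemma lap_integral (θ : ℝ) (φ Φ : ℝ → ℝ) (hφ : Continuous φ) (M : ℝ)
    (hΦ : ∀ a b : ℝ, a ≤ M → b ≤ M → Φ b - Φ a = ∫ t in a..b, φ t)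
    {a x : ℝ} (ha : a ≤ M - 1) (hx : x ≤ M - 1) :
    (∫ t in a..x, lap θ φ t) = lap θ Φ x - lap θ Φ a := by
  have hshift : ∀ r : ℝ, |r| ≤ 1 → (∫ t in a..x, φ (t + r)) = Φ (x + r) - Φ (a + r) := by
    intro r hr
    rw [intervalIntegral.integral_comp_add_right]
    have h1 : a + r ≤ M := by have := neg_abs_le r; have := le_abs_self r; linarith
    have h2 : x + r ≤ M := by have := le_abs_self r; linarith
    exact (hΦ (a + r) (x + r) h1 h2).symm
  have hs : |Real.sin θ| ≤ 1 := Real.abs_sin_le_one θ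
  have hc : |Real.cos θ| ≤ 1 := Real.abs_cos_le_one θ
  have hint : ∀ r : ℝ, IntervalIntegrable (fun t => φ (t + r)) volume a x := by
    intro r
    exact (hφ.comp (by fun_prop)).intervalIntegrable a x
  have key : (∫ t in a..x, lap θ φ t)
      = (∫ t in a..x, φ (t + Real.sin θ)) + (∫ t in a..x, φ (t + -Real.sin θ))
        + (∫ t in a..x, φ (t + Real.cos θ)) + (∫ t in a..x, φ (t + -Real.cos θ))
        - ∫ t in a..x, 4 * φ t := by
    rw [← intervalIntegral.integral_add (hint _) (hint _),
      ← intervalIntegral.integral_add ((hint _).add (hint _)) (hint _),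
      ← intervalIntegral.integral_add (((hint _).add (hint _)).add (hint _)) (hint _),
      ← intervalIntegral.integral_sub (g := fun t => 4 * φ t) ((((hint _).add (hint _)).add (hint _)).add (hint _))
        ((continuous_const.mul hφ).intervalIntegrable a x)]
    unfold lap
    congr 1
  rw [key, hshift _ hs, hshift _ (by rwa [abs_neg]), hshift _ hc, hshift _ (by rwa [abs_neg]),
    intervalIntegral.integral_const_mul,
    (hΦ a x (by linarith) (by linarith)).symm]
  unfold lap
  ring

set_option maxHeartbeats 1000000 in
theorem stmt_17 (Λ β α μ₁ μ₂ d₁ d₂ θ c : ℝ)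
    (hΛ : 0 < Λ) (hβ : 0 < β) (hα : 0 < α) (hμ₁ : 0 < μ₁) (hμ₂ : 0 < μ₂)
    (hd₁ : 0 < d₁) (hd₂ : 0 < d₂)
    (S₀ : ℝ) (hS₀ : S₀ = Λ / μ₁) (hR₀ : 1 < β * S₀ / μ₂)
    (Sstar Istar : ℝ) (hSstar : 0 < Sstar) (hIstar : 0 < Istar)
    (heq1 : Λ = β * Sstar * Istar / (1 + α * Istar) + μ₁ * Sstar)
    (heq2 : β * Sstar * Istar / (1 + α * Istar) = μ₂ * Istar)
    (S I : ℝ → ℝ)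
    (hSdiff : Differentiable ℝ S) (hIdiff : Differentiable ℝ I)
    (hSpos : ∀ ξ : ℝ, 0 < S ξ) (hIpos : ∀ ξ : ℝ, 0 < I ξ)
    (hIint : MeasureTheory.IntegrableOn I (Set.Iic 0))
    (hSeq : ∀ ξ : ℝ, c * deriv S ξ =
      d₁ * lap θ S ξ + Λ - β * S ξ * I ξ / (1 + α * I ξ) - μ₁ * S ξ)
    (hIeq : ∀ ξ : ℝ, c * deriv I ξ =
      d₂ * lap θ I ξ + β * S ξ * I ξ / (1 + α * I ξ) - μ₂ * I ξ)
    (hSlimBot : Filter.Tendsto S Filter.atBot (nhds S₀))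
    (hIlimBot : Filter.Tendsto I Filter.atBot (nhds 0))
    (hSlimTop : Filter.Tendsto S Filter.atTop (nhds Sstar))
    (hIlimTop : Filter.Tendsto I Filter.atTop (nhds Istar)) :
    0 < c := by
  by_contra hc0
  push_neg at hc0
  -- basic continuity
  have hIcont : Continuous I := hIdiff.continuous
  have hScont : Continuous S := hSdiff.continuous
  have hIden : ∀ ξ : ℝ, (0:ℝ) < 1 + α * I ξ := by
    intro ξ
    nlinarith [hIpos ξ]
  set g : ℝ → ℝ := fun ξ => β * S ξ * I ξ / (1 + α * I ξ) - μ₂ * I ξ with hgdef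
  have hgcont : Continuous g := by
    apply Continuous.sub
    · exact (((continuous_const.mul hScont).mul hIcont).div
        (continuous_const.add (continuous_const.mul hIcont)) fun ξ => (hIden ξ).ne')
    · exact continuous_const.mul hIcont
  -- Integrability of I on every Iic x
  have hIintx : ∀ x : ℝ, IntegrableOn I (Set.Iic x) := by
    intro x
    rcases le_total x 0 with h | h
    · exact hIint.mono_set (Set.Iic_subset_Iic.2 h)
    · refine (hIint.union (hIcont.integrableOn_Icc (a := 0) (b := x))).mono_set ?_
      intro t ht
      rcases le_total t 0 with h' | h'
      · exact Or.inl h'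
      · exact Or.inr ⟨h', ht⟩
  set F : ℝ → ℝ := fun x => ∫ t in Set.Iic x, I t with hFdef
  have hFsub : ∀ a b : ℝ, F b - F a = ∫ t in a..b, I t := fun a b =>
    intervalIntegral.integral_Iic_sub_Iic (hIintx a) (hIintx b)
  have hFmono : Monotone F := by
    intro a b hab
    have h1 := hFsub a b
    have h2 : (0:ℝ) ≤ ∫ t in a..b, I t :=
      intervalIntegral.integral_nonneg hab fun t _ => (hIpos t).le
    linarith
  have hFnonneg : ∀ x, 0 ≤ F x := fun x =>
    setIntegral_nonneg measurableSet_Iic fun t _ => (hIpos t).le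
  have hFpos : ∀ x, 0 < F x := by
    intro x
    have h1 : F x - F (x - 1) = ∫ t in (x-1)..x, I t := hFsub (x-1) x
    have h2 : (0:ℝ) < ∫ t in (x-1)..x, I t :=
      intervalIntegral.intervalIntegral_pos_of_pos (hIcont.intervalIntegrable _ _) hIpos
        (by linarith)
    have := hFnonneg (x - 1)
    linarith
  have hFcont : Continuous F := by
    have : Continuous fun x => F 0 + ∫ t in (0:ℝ)..x, I t :=
      continuous_const.add (intervalIntegral.continuous_primitive
        (fun a b => hIcont.intervalIntegrable a b) 0)
    refine this.congr fun x => ?_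
    have := hFsub 0 x
    linarith
  have hFlim : Tendsto F atBot (nhds 0) := by
    have h1 : Tendsto (fun a => ∫ t in a..(0:ℝ), I t) atBot (nhds (F 0)) :=
      intervalIntegral_tendsto_integral_Iic 0 (hIintx 0) tendsto_id
    have h2 : Tendsto (fun a => F 0 - ∫ t in a..(0:ℝ), I t) atBot (nhds (F 0 - F 0)) :=
      tendsto_const_nhds.sub h1
    rw [sub_self] at h2
    refine h2.congr fun a => ?_
    have := hFsub a 0
    linarith
  have hlapFcont : Continuous (lap θ F) := lap_continuous hFcont
  -- once-integrated identity
  have key1 : ∀ a x : ℝ, c * I x - c * I a = d₂ * (lap θ F x - lap θ F a) + ∫ t in a..x, g t := by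
    intro a x
    have hder : ∀ u : ℝ, HasDerivAt (fun v => c * I v) (d₂ * lap θ I u + g u) u := by
      intro u
      have h1 : HasDerivAt (fun v => c * I v) (c * deriv I u) u :=
        ((hIdiff u).hasDerivAt).const_mul c
      have h2 : c * deriv I u = d₂ * lap θ I u + g u := by
        rw [hIeq u, hgdef]; ring
      rwa [h2] at h1
    have hlapIcont : Continuous (lap θ I) := lap_continuous hIcont
    have hintc : IntervalIntegrable (fun u => d₂ * lap θ I u + g u) volume a x :=
      ((continuous_const.mul hlapIcont).add hgcont).intervalIntegrable a x
    have hFTC := intervalIntegral.integral_eq_sub_of_hasDerivAt (fun u _ => hder u) hintc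
    have hsplit : (∫ u in a..x, (d₂ * lap θ I u + g u))
        = d₂ * (∫ u in a..x, lap θ I u) + ∫ u in a..x, g u := by
      rw [intervalIntegral.integral_add (f := fun u => d₂ * lap θ I u) ((continuous_const.mul hlapIcont).intervalIntegrable a x)
        (hgcont.intervalIntegrable a x), intervalIntegral.integral_const_mul]
    have hlapint : (∫ u in a..x, lap θ I u) = lap θ F x - lap θ F a := by
      refine lap_integral θ I F hIcont (max a x + 1) (fun a' b' _ _ => hFsub a' b') ?_ ?_
      · have := le_max_left a x; linarith
      · have := le_max_right a x; linarith
    rw [hsplit, hlapint] at hFTC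
    linarith
  set G : ℝ → ℝ := fun x => c * I x - d₂ * lap θ F x with hGdef
  have hGcont : Continuous G := (continuous_const.mul hIcont).sub (continuous_const.mul hlapFcont)
  have hGlim : ∀ x : ℝ, Tendsto (fun a => ∫ t in a..x, g t) atBot (nhds (G x)) := by
    intro x
    have hIb : Tendsto (fun a => c * I a) atBot (nhds (c * 0)) := hIlimBot.const_mul c
    have hLb : Tendsto (fun a => d₂ * lap θ F a) atBot (nhds (d₂ * 0)) :=
      (lap_tendsto_atBot hFlim).const_mul d₂
    have h1 : Tendsto (fun a => c * I x - c * I a - d₂ * lap θ F x + d₂ * lap θ F a) atBot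
        (nhds (c * I x - c * 0 - d₂ * lap θ F x + d₂ * 0)) :=
      ((tendsto_const_nhds.sub hIb).sub tendsto_const_nhds).add hLb
    have h2 : c * I x - c * 0 - d₂ * lap θ F x + d₂ * 0 = G x := by rw [hGdef]; ring
    rw [h2] at h1
    refine h1.congr fun a => ?_
    have := key1 a x
    linarith
  -- epsilon and M
  have hβS₀ : μ₂ < β * S₀ := by
    rw [one_lt_div hμ₂] at hR₀
    linarith
  set ε : ℝ := min ((β * S₀ - μ₂)/2) d₂ with hεdef
  have hεpos : 0 < ε := lt_min (by linarith) hd₂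
  have hεd₂ : ε ≤ d₂ := min_le_right _ _
  obtain ⟨M, hMg⟩ : ∃ M : ℝ, ∀ ξ ≤ M, ε * I ξ ≤ g ξ := by
    have hden : Tendsto (fun ξ => 1 + α * I ξ) atBot (nhds (1 + α * 0)) :=
      ((hIlimBot.const_mul α).const_add 1)
    rw [mul_zero, add_zero] at hden
    have hfrac : Tendsto (fun ξ => β * S ξ / (1 + α * I ξ) - μ₂) atBot
        (nhds (β * S₀ / 1 - μ₂)) :=
      ((hSlimBot.const_mul β).div hden one_ne_zero).sub tendsto_const_nhds
    rw [div_one] at hfrac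
    have hev : ∀ᶠ ξ in atBot, ε ≤ β * S ξ / (1 + α * I ξ) - μ₂ := by
      refine hfrac.eventually (eventually_ge_nhds ?_)
      have : ε ≤ (β * S₀ - μ₂)/2 := min_le_left _ _
      linarith
    rw [eventually_atBot] at hev
    obtain ⟨M, hM⟩ := hev
    refine ⟨M, fun ξ hξ => ?_⟩
    have h1 := hM ξ hξ
    have hgξ : g ξ = I ξ * (β * S ξ / (1 + α * I ξ) - μ₂) := by
      rw [hgdef]
      field_simp
    rw [hgξ]
    nlinarith [hIpos ξ]
  -- G ≥ ε F on Iic M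
  have hGF : ∀ x ≤ M, ε * F x ≤ G x := by
    intro x hx
    have h1 : Tendsto (fun a => ε * (F x - F a)) atBot (nhds (ε * (F x - 0))) :=
      (tendsto_const_nhds.sub hFlim).const_mul ε
    rw [sub_zero] at h1
    refine le_of_tendsto_of_tendsto h1 (hGlim x) ?_
    filter_upwards [eventually_le_atBot x] with a ha
    rw [hFsub a x, ← intervalIntegral.integral_const_mul]
    refine intervalIntegral.integral_mono_on ha
      ((continuous_const.mul hIcont).intervalIntegrable a x)
      (hgcont.intervalIntegrable a x) fun t ht => hMg t (ht.2.trans hx)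
  -- geometric decay step
  set h : ℝ := max |Real.sin θ| |Real.cos θ| with hhdef
  have hh0 : (0:ℝ) < h := lt_of_lt_of_le (by norm_num) (by
    by_contra hcon
    push_neg at hcon
    have h1 : |Real.sin θ| < 1/2 := lt_of_le_of_lt (le_max_left _ _) hcon
    have h2 : |Real.cos θ| < 1/2 := lt_of_le_of_lt (le_max_right _ _) hcon
    nlinarith [Real.sin_sq_add_cos_sq θ, sq_abs (Real.sin θ), sq_abs (Real.cos θ),
      abs_nonneg (Real.sin θ), abs_nonneg (Real.cos θ)] : (1:ℝ)/2 ≤ h)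
  set q : ℝ := 1 - ε / (2 * d₂) with hqdef
  have hq1 : q < 1 := by
    have : 0 < ε / (2 * d₂) := div_pos hεpos (by linarith)
    rw [hqdef]; linarith
  have hq0 : 0 < q := by
    have : ε / (2 * d₂) ≤ 1/2 := by
      rw [div_le_iff₀ (by linarith : (0:ℝ) < 2 * d₂)]
      linarith
    rw [hqdef]; linarith
  have hstep : ∀ x ≤ M, F (x - h) ≤ q * F x := by
    intro x hx
    have hG := hGF x hx
    have hcI : c * I x ≤ 0 := mul_nonpos_of_nonpos_of_nonneg hc0 (hIpos x).le
    have hlaple : d₂ * lap θ F x ≤ -(ε * F x) := by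
      have : d₂ * lap θ F x = c * I x - G x := by rw [hGdef]; ring
      linarith
    have pair : ∀ r : ℝ, |r| ≤ h → F x + F (x - h) ≤ F (x + r) + F (x - r) := by
      intro r hr
      have hr1 := le_abs_self r
      have hr2 := neg_abs_le r
      rcases le_total 0 r with h' | h'
      · have e1 : F x ≤ F (x + r) := hFmono (by linarith)
        have e2 : F (x - h) ≤ F (x - r) := hFmono (by linarith)
        linarith
      · have e1 : F x ≤ F (x - r) := hFmono (by linarith)
        have e2 : F (x - h) ≤ F (x + r) := hFmono (by
          have : -r ≤ |r| := by rw [abs_of_nonpos h']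
          linarith)
        linarith
    have p1 := pair (Real.sin θ) (le_max_left _ _)
    have p2 := pair (Real.cos θ) (le_max_right _ _)
    have hlapge : 2 * F (x - h) - 2 * F x ≤ lap θ F x := by
      unfold lap
      linarith
    have hmul : d₂ * (2 * F (x - h) - 2 * F x) ≤ d₂ * lap θ F x :=
      mul_le_mul_of_nonneg_left hlapge hd₂.le
    have hexp : d₂ * (2 * F (x - h) - 2 * F x) = 2 * d₂ * F (x - h) - 2 * d₂ * F x := by ring
    have h2d : (0:ℝ) < 2 * d₂ := by linarith
    have hq2 : 2 * d₂ * (q * F x) = 2 * d₂ * F x - ε * F x := by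
      rw [hqdef]; field_simp
    have hfin : 2 * d₂ * F (x - h) ≤ 2 * d₂ * (q * F x) := by linarith
    exact le_of_mul_le_mul_left hfin h2d
  -- geometric decay
  have hFdecay : ∀ n : ℕ, F (M - n * h) ≤ q ^ n * F M := by
    intro n
    induction n with
    | zero => simp
    | succ n ih =>
      have e1 : M - (n+1 : ℕ) * h = (M - n * h) - h := by push_cast; ring
      have e2 : F ((M - n * h) - h) ≤ q * F (M - n * h) :=
        hstep (M - n * h) (by nlinarith [hh0, Nat.cast_nonneg (α := ℝ) n])
      calc F (M - (n+1 : ℕ) * h) = F ((M - n * h) - h) := by rw [e1]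
        _ ≤ q * F (M - n * h) := e2
        _ ≤ q * (q ^ n * F M) := mul_le_mul_of_nonneg_left ih hq0.le
        _ = q ^ (n+1) * F M := by ring
  -- exponential bound
  set l : ℝ := -Real.log q / h with hldef
  have hlogq : Real.log q < 0 := Real.log_neg hq0 hq1
  have hl : 0 < l := div_pos (by linarith) hh0
  set C : ℝ := F M * Real.exp (-Real.log q - l * M) with hCdef
  have hFexp : ∀ x ≤ M, F x ≤ C * Real.exp (l * x) := by
    intro x hx
    set n : ℕ := ⌊(M - x)/h⌋₊ with hndef
    have hMx : 0 ≤ (M - x)/h := div_nonneg (by linarith) hh0.le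
    have hn1 : (n:ℝ) * h ≤ M - x := by
      have h1 : (n:ℝ) ≤ (M - x)/h := Nat.floor_le hMx
      have := mul_le_mul_of_nonneg_right h1 hh0.le
      rwa [div_mul_cancel₀ _ hh0.ne'] at this
    have hF1 : F x ≤ q ^ n * F M := le_trans (hFmono (by linarith)) (hFdecay n)
    have hn2 : (M - x)/h - 1 < (n:ℝ) := Nat.sub_one_lt_floor _
    have hq' : q ^ n ≤ Real.exp (-Real.log q - l * M) * Real.exp (l * x) := by
      have e1 : q ^ n = Real.exp (n * Real.log q) := by
        rw [← Real.log_pow, Real.exp_log (pow_pos hq0 n)]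
      have e2 : (n:ℝ) * Real.log q ≤ ((M - x)/h - 1) * Real.log q :=
        mul_le_mul_of_nonpos_right hn2.le hlogq.le
      have e3 : ((M - x)/h - 1) * Real.log q = (-Real.log q - l * M) + l * x := by
        rw [hldef]
        field_simp
        ring
      calc q ^ n = Real.exp (n * Real.log q) := e1
        _ ≤ Real.exp (((M - x)/h - 1) * Real.log q) := Real.exp_le_exp.2 e2
        _ = Real.exp (-Real.log q - l * M) * Real.exp (l * x) := by
            rw [e3, Real.exp_add]
    calc F x ≤ q ^ n * F M := hF1
      _ ≤ (Real.exp (-Real.log q - l * M) * Real.exp (l * x)) * F M :=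
          mul_le_mul_of_nonneg_right hq' (hFnonneg M)
      _ = C * Real.exp (l * x) := by rw [hCdef]; ring
  -- integrability of F
  have hFintM : IntegrableOn F (Set.Iic M) := by
    refine Integrable.mono' ((integrableOn_exp_mul_Iic' hl M).const_mul C)
      (hFcont.aestronglyMeasurable.restrict) ?_
    refine (ae_restrict_iff' measurableSet_Iic).2 (ae_of_all _ fun x hx => ?_)
    rw [Real.norm_eq_abs, abs_of_nonneg (hFnonneg x)]
    exact hFexp x hx
  have hFint : ∀ z ≤ M, IntegrableOn F (Set.Iic z) := fun z hz =>
    hFintM.mono_set (Set.Iic_subset_Iic.2 hz)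
  -- second primitive
  set y₀ : ℝ := M - 1 with hy₀def
  have hy₀M : y₀ ≤ M := by rw [hy₀def]; linarith
  set H : ℝ → ℝ := fun z => ∫ t in Set.Iic z, F t with hHdef
  have hHsub : ∀ a b : ℝ, a ≤ M → b ≤ M → H b - H a = ∫ t in a..b, F t := fun a b ha hb =>
    intervalIntegral.integral_Iic_sub_Iic (hFint a ha) (hFint b hb)
  have hHnonneg : ∀ z, 0 ≤ H z := fun z =>
    setIntegral_nonneg measurableSet_Iic fun t _ => hFnonneg t
  have hHlim : Tendsto H atBot (nhds 0) := by
    have h1 : Tendsto (fun a => ∫ t in a..M, F t) atBot (nhds (H M)) :=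
      intervalIntegral_tendsto_integral_Iic M hFintM tendsto_id
    have h2 : Tendsto (fun a => H M - ∫ t in a..M, F t) atBot (nhds (H M - H M)) :=
      tendsto_const_nhds.sub h1
    rw [sub_self] at h2
    refine h2.congr' ?_
    filter_upwards [eventually_le_atBot M] with a ha
    have := hHsub a M ha le_rfl
    linarith
  have hlapHbot : Tendsto (fun a => lap θ H a) atBot (nhds 0) := lap_tendsto_atBot hHlim
  -- second integration identity
  have key2 : ∀ a : ℝ, a ≤ y₀ →
      (∫ t in a..y₀, G t) = c * (F y₀ - F a) - d₂ * (lap θ H y₀ - lap θ H a) := by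
    intro a ha
    have h1 : (∫ t in a..y₀, G t)
        = c * (∫ t in a..y₀, I t) - d₂ * ∫ t in a..y₀, lap θ F t := by
      simp only [hGdef]
      rw [intervalIntegral.integral_sub (f := fun t => c * I t) (g := fun t => d₂ * lap θ F t) ((continuous_const.mul hIcont).intervalIntegrable _ _)
        ((continuous_const.mul hlapFcont).intervalIntegrable _ _),
        intervalIntegral.integral_const_mul, intervalIntegral.integral_const_mul]
    have h2 : (∫ t in a..y₀, I t) = F y₀ - F a := (hFsub a y₀).symm
    have h3 : (∫ t in a..y₀, lap θ F t) = lap θ H y₀ - lap θ H a :=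
      lap_integral θ F H hFcont M hHsub (by rw [hy₀def] at ha; exact ha) (le_of_eq hy₀def)
    rw [h1, h2, h3]
  -- epsilon bound for H
  have hεH : ε * H y₀ ≤ c * F y₀ - d₂ * lap θ H y₀ := by
    have hlhs : Tendsto (fun a => ε * (H y₀ - H a)) atBot (nhds (ε * (H y₀ - 0))) :=
      (tendsto_const_nhds.sub hHlim).const_mul ε
    rw [sub_zero] at hlhs
    have hrhs : Tendsto (fun a => c * (F y₀ - F a) - d₂ * (lap θ H y₀ - lap θ H a)) atBot
        (nhds (c * (F y₀ - 0) - d₂ * (lap θ H y₀ - 0))) :=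
      ((tendsto_const_nhds.sub hFlim).const_mul c).sub
        ((tendsto_const_nhds.sub hlapHbot).const_mul d₂)
    rw [sub_zero, sub_zero] at hrhs
    refine le_of_tendsto_of_tendsto hlhs hrhs ?_
    filter_upwards [eventually_le_atBot y₀] with a ha
    show ε * (H y₀ - H a) ≤ c * (F y₀ - F a) - d₂ * (lap θ H y₀ - lap θ H a)
    rw [← key2 a ha, hHsub a y₀ (ha.trans hy₀M) hy₀M, ← intervalIntegral.integral_const_mul]
    refine intervalIntegral.integral_mono_on ha
      ((continuous_const.mul hFcont).intervalIntegrable _ _)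
      (hGcont.intervalIntegrable _ _) fun t ht => hGF t (ht.2.trans hy₀M)
  -- convexity: lap H y₀ ≥ 0
  have hHconvpair : ∀ r : ℝ, |r| ≤ 1 → 2 * H y₀ ≤ H (y₀ + r) + H (y₀ - r) := by
    have main : ∀ r' : ℝ, 0 ≤ r' → r' ≤ 1 → 2 * H y₀ ≤ H (y₀ + r') + H (y₀ - r') := by
      intro r' h0 h1
      have e1 : H (y₀ + r') - H y₀ = ∫ t in y₀..(y₀ + r'), F t :=
        hHsub _ _ hy₀M (by rw [hy₀def]; linarith)
      have e2 : H y₀ - H (y₀ - r') = ∫ t in (y₀ - r')..y₀, F t :=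
        hHsub _ _ (by linarith) hy₀M
      have e3 : (∫ t in (y₀ - r')..y₀, F t) = ∫ t in y₀..(y₀ + r'), F (t - r') := by
        rw [intervalIntegral.integral_comp_sub_right]
        congr 1 <;> ring
      have e4 : (∫ t in y₀..(y₀ + r'), F (t - r')) ≤ ∫ t in y₀..(y₀ + r'), F t :=
        intervalIntegral.integral_mono_on (by linarith)
          ((hFcont.comp (by fun_prop)).intervalIntegrable _ _)
          (hFcont.intervalIntegrable _ _) fun t _ => hFmono (by linarith)
      linarith
    intro r hr
    rcases le_total 0 r with h0 | h0
    · exact main r h0 (by rwa [abs_of_nonneg h0] at hr)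
    · have := main (-r) (by linarith) (by rwa [abs_of_nonpos h0] at hr)
      rw [show y₀ + -r = y₀ - r by ring, show y₀ - -r = y₀ + r by ring] at this
      linarith
  have hlapH : 0 ≤ lap θ H y₀ := by
    have p1 := hHconvpair (Real.sin θ) (Real.abs_sin_le_one θ)
    have p2 := hHconvpair (Real.cos θ) (Real.abs_cos_le_one θ)
    unfold lap
    linarith
  have hHpos : 0 < H y₀ := by
    have h1 : H y₀ - H (y₀ - 1) = ∫ t in (y₀-1)..y₀, F t :=
      hHsub _ _ (by linarith) hy₀M
    have h2 : (0:ℝ) < ∫ t in (y₀-1)..y₀, F t :=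
      intervalIntegral.intervalIntegral_pos_of_pos (hFcont.intervalIntegrable _ _) hFpos
        (by linarith)
    have := hHnonneg (y₀ - 1)
    linarith
  -- conclusion
  have hcF : c * F y₀ ≤ 0 := mul_nonpos_of_nonpos_of_nonneg hc0 (hFnonneg y₀)
  nlinarith [mul_pos hεpos hHpos, mul_nonneg hd₂.le hlapH]
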